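/- arXiv:1208.0848 — 2 statements merged into one kernel-verified Lean document; each statement's English description precedes it below -/
import Mathlib

section
/- If E[Y²] < ∞, then for every f ∈ L²_{ρ_X}, the symmetrized least squares error satisfies E^{sls}(f) = 2·Var[f(X) - f_ρ(X)] + 2·C_ρ, where C_ρ = E[(Y - f_ρ(X))²]. -/
open MeasureTheory ProbabilityTheory

/-- Any a.e.-strongly-measurable function of the first coordinate is a.e. equal to a genuinely
measurable function of the first coordinate. -/
lemma exists_meas_fst {X : Type*} [MeasurableSpace X] (ρ : Measure (X × ℝ))
    [IsFiniteMeasure ρ] (f : X → ℝ)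
    (h : AEStronglyMeasurable (fun z : X × ℝ => f z.1) ρ) :
    ∃ F : X → ℝ, Measurable F ∧ (fun z : X × ℝ => f z.1) =ᵐ[ρ] (fun z => F z.1) := by
  obtain ⟨g, hg, hfg⟩ := h
  have hdis : ρ.fst ⊗ₘ ρ.condKernel = ρ := ρ.disintegrate ρ.condKernel
  have hfg' : ∀ᵐ z ∂(ρ.fst ⊗ₘ ρ.condKernel), f z.1 = g z := by rw [hdis]; exact hfg
  have hae := Measure.ae_ae_of_ae_compProd hfg'
  set F' : X → ℝ := fun x => ∫ y, Real.arctan (g (x, y)) ∂ρ.condKernel x with hF'def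
  have hF' : Measurable F' := by
    have : StronglyMeasurable fun z : X × ℝ => Real.arctan (g z) :=
      Real.continuous_arctan.comp_stronglyMeasurable hg
    exact (this.integral_kernel_prod_right' (κ := ρ.condKernel)).measurable
  have htan : Measurable Real.tan := by
    have : Real.tan = fun x => Real.sin x / Real.cos x := by
      funext x; exact Real.tan_eq_sin_div_cos x
    rw [this]
    exact Real.measurable_sin.div Real.measurable_cos
  refine ⟨fun x => Real.tan (F' x), htan.comp hF', ?_⟩
  have key : ∀ᵐ x ∂ρ.fst, f x = Real.tan (F' x) := by
    filter_upwards [hae] with x hx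
    have h1 : F' x = Real.arctan (f x) := by
      have h2 : ∫ y, Real.arctan (g (x, y)) ∂ρ.condKernel x
          = ∫ _, Real.arctan (f x) ∂ρ.condKernel x := by
        refine integral_congr_ae ?_
        filter_upwards [hx] with y hy
        rw [hy]
      rw [hF'def]
      simp only [h2, integral_const, measure_univ, probReal_univ, ENNReal.toReal_one, one_smul]
    rw [h1, Real.tan_arctan]
  have : ∀ᵐ z ∂ρ, f z.1 = Real.tan (F' z.1) :=
    ae_of_ae_map measurable_fst.aemeasurable key
  exact this

/-- Product of two `L²` functions is integrable. -/
lemma L2_mul_integrable {α : Type*} [MeasurableSpace α] {μ : Measure α}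
    {u v : α → ℝ} (hu : MemLp u 2 μ) (hv : MemLp v 2 μ) :
    Integrable (fun x => u x * v x) μ := by
  have h := (((hu.add hv).integrable_sq).sub hu.integrable_sq).sub hv.integrable_sq
  have heq : (fun x => u x * v x)
      = fun x => (((u + v) x) ^ 2 - u x ^ 2 - v x ^ 2) / 2 := by
    funext x; simp only [Pi.add_apply]; ring
  rw [heq]
  exact h.div_const 2

/-- Orthogonality: `Y - E[Y | fst]` is orthogonal to functions of the first coordinate. -/
lemma orth_lemma {X : Type*} [MeasurableSpace X] (ρ : Measure (X × ℝ))
    [IsProbabilityMeasure ρ] (G h : X → ℝ) (hhm : Measurable h)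
    (hY : MemLp (fun z : X × ℝ => z.2) 2 ρ)
    (hG2 : MemLp (fun z : X × ℝ => G z.1) 2 ρ)
    (hh2 : MemLp (fun z : X × ℝ => h z.1) 2 ρ)
    (hGcond : (fun z : X × ℝ => G z.1)
      =ᵐ[ρ] ρ[fun z : X × ℝ => z.2 | MeasurableSpace.comap Prod.fst inferInstance]) :
    ∫ z, (z.2 - G z.1) * h z.1 ∂ρ = 0 := by
  have hm : MeasurableSpace.comap (Prod.fst : X × ℝ → X) inferInstance
      ≤ Prod.instMeasurableSpace := measurable_fst.comap_le
  have hfstm : Measurable[MeasurableSpace.comap (Prod.fst : X × ℝ → X) inferInstance]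
      (Prod.fst : X × ℝ → X) := fun s hs => ⟨s, hs, rfl⟩
  have hw : StronglyMeasurable[MeasurableSpace.comap (Prod.fst : X × ℝ → X) inferInstance]
      (fun z : X × ℝ => h z.1) := (hhm.comp hfstm).stronglyMeasurable
  have hYint : Integrable (fun z : X × ℝ => z.2) ρ := hY.integrable one_le_two
  have hwY : Integrable ((fun z : X × ℝ => h z.1) * fun z : X × ℝ => z.2) ρ :=
    L2_mul_integrable hh2 hY
  have key := condExp_mul_of_stronglyMeasurable_left
    (m := MeasurableSpace.comap (Prod.fst : X × ℝ → X) inferInstance) hw hwY hYint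
  have h1 : ∫ z, h z.1 * z.2 ∂ρ = ∫ z, h z.1 * G z.1 ∂ρ := by
    calc ∫ z, h z.1 * z.2 ∂ρ
        = ∫ z, ((fun z : X × ℝ => h z.1) * fun z : X × ℝ => z.2) z ∂ρ := rfl
      _ = ∫ z, (ρ[(fun z : X × ℝ => h z.1) * fun z : X × ℝ => z.2 |
            MeasurableSpace.comap (Prod.fst : X × ℝ → X) inferInstance]) z ∂ρ :=
          (integral_condExp hm).symm
      _ = ∫ z, ((fun z : X × ℝ => h z.1) * ρ[fun z : X × ℝ => z.2 |
            MeasurableSpace.comap (Prod.fst : X × ℝ → X) inferInstance]) z ∂ρ :=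
          integral_congr_ae key
      _ = ∫ z, h z.1 * G z.1 ∂ρ := by
          refine integral_congr_ae ?_
          filter_upwards [hGcond] with z hz
          simp only [Pi.mul_apply, hz]
  have h2 : Integrable (fun z : X × ℝ => h z.1 * z.2) ρ := L2_mul_integrable hh2 hY
  have h3 : Integrable (fun z : X × ℝ => h z.1 * G z.1) ρ := L2_mul_integrable hh2 hG2
  have h4 : ∫ z, (z.2 - G z.1) * h z.1 ∂ρ
      = ∫ z, h z.1 * z.2 ∂ρ - ∫ z, h z.1 * G z.1 ∂ρ := by
    rw [← integral_sub h2 h3]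
    refine integral_congr_ae (Filter.Eventually.of_forall fun z => ?_)
    ring
  rw [h4, h1, sub_self]

/-- If E[Y²] < ∞ then for every f ∈ L²_{ρ_X}, the symmetrized least squares error
E^{sls}(f) = ∫∫ [(y - f(x)) - (y' - f(x'))]² dρ dρ equals
2·Var[f(X) - f_ρ(X)] + 2·C_ρ with C_ρ = E[(Y - f_ρ(X))²]. -/
theorem stmt_1 {X : Type*} [MeasurableSpace X] (ρ : Measure (X × ℝ))
    [IsProbabilityMeasure ρ] (f frho : X → ℝ)
    (hY : MemLp (fun z : X × ℝ => z.2) 2 ρ)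
    (hf : MemLp (fun z : X × ℝ => f z.1) 2 ρ)
    (hfrho : MemLp (fun z : X × ℝ => frho z.1) 2 ρ)
    (hreg : (fun z : X × ℝ => frho z.1)
      =ᵐ[ρ] ρ[fun z : X × ℝ => z.2 | MeasurableSpace.comap Prod.fst inferInstance]) :
    ∫ z, ∫ z', ((z.2 - f z.1) - (z'.2 - f z'.1)) ^ 2 ∂ρ ∂ρ
      = 2 * variance (fun z : X × ℝ => f z.1 - frho z.1) ρ
        + 2 * ∫ z, (z.2 - frho z.1) ^ 2 ∂ρ := by
  obtain ⟨F, hFm, hFe⟩ := exists_meas_fst ρ f hf.aestronglyMeasurable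
  obtain ⟨G, hGm, hGe⟩ := exists_meas_fst ρ frho hfrho.aestronglyMeasurable
  have hF2 : MemLp (fun z : X × ℝ => F z.1) 2 ρ := hf.ae_eq hFe
  have hG2 : MemLp (fun z : X × ℝ => G z.1) 2 ρ := hfrho.ae_eq hGe
  have hGcond : (fun z : X × ℝ => G z.1)
      =ᵐ[ρ] ρ[fun z : X × ℝ => z.2 | MeasurableSpace.comap Prod.fst inferInstance] :=
    hGe.symm.trans hreg
  -- the functions
  set g : X × ℝ → ℝ := fun z => z.2 - F z.1 with hgdef
  set u : X × ℝ → ℝ := fun z => z.2 - G z.1 with hudef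
  set v : X × ℝ → ℝ := fun z => F z.1 - G z.1 with hvdef
  have hg2 : MemLp g 2 ρ := hY.sub hF2
  have hu2 : MemLp u 2 ρ := hY.sub hG2
  have hv2 : MemLp v 2 ρ := hF2.sub hG2
  have hgi : Integrable g ρ := hg2.integrable one_le_two
  have hui : Integrable u ρ := hu2.integrable one_le_two
  have hvi : Integrable v ρ := hv2.integrable one_le_two
  set I : ℝ := ∫ z, g z ∂ρ with hIdef
  set S : ℝ := ∫ z, g z ^ 2 ∂ρ with hSdef
  -- step 0 : rewrite the statement with F, G
  have hLHS : ∫ z, ∫ z', ((z.2 - f z.1) - (z'.2 - f z'.1)) ^ 2 ∂ρ ∂ρ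
      = ∫ z, ∫ z', (g z - g z') ^ 2 ∂ρ ∂ρ := by
    refine integral_congr_ae ?_
    filter_upwards [hFe] with z hz
    refine integral_congr_ae ?_
    filter_upwards [hFe] with z' hz'
    rw [hgdef]; simp only [hz, hz']
  have hvar : variance (fun z : X × ℝ => f z.1 - frho z.1) ρ = variance v ρ := by
    have hcongr : (fun z : X × ℝ => f z.1 - frho z.1) =ᵐ[ρ] v := by
      filter_upwards [hFe, hGe] with z h1 h2
      rw [hvdef]; simp only [h1, h2]
    have hmean : ∫ z, f z.1 - frho z.1 ∂ρ = ∫ z, v z ∂ρ := integral_congr_ae hcongr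
    unfold ProbabilityTheory.variance ProbabilityTheory.evariance
    congr 1
    refine lintegral_congr_ae ?_
    filter_upwards [hcongr] with z hz
    rw [hz, hmean]
  have hC : ∫ z, (z.2 - frho z.1) ^ 2 ∂ρ = ∫ z, u z ^ 2 ∂ρ := by
    refine integral_congr_ae ?_
    filter_upwards [hGe] with z hz
    rw [hudef]; simp only [hz]
  rw [hLHS, hvar, hC]
  -- step 1 : double integral equals 2 * (S - I^2)
  have hg2i : Integrable (fun z => g z ^ 2) ρ := hg2.integrable_sq
  have hinner : ∀ a : ℝ, ∫ z', (a - g z') ^ 2 ∂ρ = a ^ 2 - 2 * a * I + S := by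
    intro a
    have e1 : (fun z' => (a - g z') ^ 2)
        = fun z' => (a ^ 2 - 2 * a * g z') + g z' ^ 2 := by
      funext z'; ring
    have h1 : Integrable (fun z' : X × ℝ => a ^ 2 - 2 * a * g z') ρ :=
      (integrable_const _).sub (hgi.const_mul _)
    have h2 : Integrable (fun z' : X × ℝ => 2 * a * g z') ρ := hgi.const_mul _
    rw [e1, integral_add h1 hg2i, integral_sub (integrable_const _) h2,
      integral_const, integral_const_mul]
    simp [hIdef, hSdef]
    all_goals ring
  have hstep1 : ∫ z, ∫ z', (g z - g z') ^ 2 ∂ρ ∂ρ = 2 * (S - I ^ 2) := by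
    have e2 : (fun z => ∫ z', (g z - g z') ^ 2 ∂ρ)
        = fun z => (g z ^ 2 - 2 * g z * I) + S := by
      funext z; rw [hinner (g z)]
    have h3 : Integrable (fun z : X × ℝ => 2 * g z * I) ρ := by
      have : (fun z : X × ℝ => 2 * g z * I) = fun z : X × ℝ => (2 * I) * g z := by
        funext z; ring
      rw [this]; exact hgi.const_mul _
    have h4 : Integrable (fun z : X × ℝ => g z ^ 2 - 2 * g z * I) ρ := hg2i.sub h3
    rw [e2, integral_add h4 (integrable_const _), integral_sub hg2i h3, integral_const]
    have h5 : ∫ z, 2 * g z * I ∂ρ = 2 * I * I := by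
      have h6 : (fun z : X × ℝ => 2 * g z * I) = fun z : X × ℝ => (2 * I) * g z := by
        funext z; ring
      rw [h6, integral_const_mul]
    rw [h5]
    simp only [measure_univ, probReal_univ, ENNReal.toReal_one, smul_eq_mul, one_mul, ← hSdef]
    all_goals ring
  rw [hstep1]
  -- step 2 : variance of g
  have hvg : variance g ρ = S - I ^ 2 := by
    rw [variance_eq_sub hg2]
    simp only [hSdef, hIdef]
    congr 1
  -- step 3 : orthogonality and mean-zero of u
  have horthv : ∫ z, u z * v z ∂ρ = 0 := by
    have hFG2 : MemLp (fun z : X × ℝ => (fun x => F x - G x) z.1) 2 ρ := by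
      exact hF2.sub hG2
    have horth := orth_lemma ρ G (fun x => F x - G x) (hFm.sub hGm) hY hG2 hFG2 hGcond
    simpa [hudef, hvdef] using horth
  have humean : ∫ z, u z ∂ρ = 0 := by
    have hm : MeasurableSpace.comap (Prod.fst : X × ℝ → X) inferInstance
        ≤ Prod.instMeasurableSpace := measurable_fst.comap_le
    have hGint : ∫ z, G z.1 ∂ρ = ∫ z, z.2 ∂ρ := by
      calc ∫ z, G z.1 ∂ρ
          = ∫ z, (ρ[fun z : X × ℝ => z.2 | MeasurableSpace.comap Prod.fst inferInstance]) z ∂ρ :=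
            integral_congr_ae hGcond
        _ = ∫ z, z.2 ∂ρ := integral_condExp hm
    rw [hudef]
    rw [integral_sub (hY.integrable one_le_two) (hG2.integrable one_le_two), hGint, sub_self]
  -- step 4 : put everything together
  have hu2i : Integrable (fun z => u z ^ 2) ρ := hu2.integrable_sq
  have hv2i : Integrable (fun z => v z ^ 2) ρ := hv2.integrable_sq
  have huvi : Integrable (fun z => u z * v z) ρ := L2_mul_integrable hu2 hv2
  have hguv : ∀ z, g z = u z - v z := by intro z; rw [hgdef, hudef, hvdef]; ring
  have hS : S = ∫ z, u z ^ 2 ∂ρ + ∫ z, v z ^ 2 ∂ρ := by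
    have e3 : (fun z => g z ^ 2) = fun z => (u z ^ 2 - 2 * (u z * v z)) + v z ^ 2 := by
      funext z; rw [hguv z]; ring
    have h7 : Integrable (fun z : X × ℝ => 2 * (u z * v z)) ρ := huvi.const_mul 2
    have h8 : Integrable (fun z : X × ℝ => u z ^ 2 - 2 * (u z * v z)) ρ := hu2i.sub h7
    rw [hSdef, e3, integral_add h8 hv2i, integral_sub hu2i h7, integral_const_mul, horthv]
    ring
  have hI : I = - ∫ z, v z ∂ρ := by
    have e4 : (fun z => g z) = fun z => u z - v z := funext hguv
    rw [hIdef, e4, integral_sub hui hvi, humean]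
    ring
  have hvarv : variance v ρ = ∫ z, v z ^ 2 ∂ρ - (∫ z, v z ∂ρ) ^ 2 := by
    rw [variance_eq_sub hv2]
    congr 1
  rw [hS, hI, hvarv]
  ring
end

section
/- If |Y| ≤ M almost surely, then almost surely |U_f(z,z')| ≤ 36 C_G (M + sup_{f∈H}‖f‖_∞) · |(f(x) - f_ρ(x)) - (f(x') - f_ρ(x'))| for all f ∈ H, and similarly |U_f - U_g| ≤ 36 C_G (M + sup_{f∈H}‖f‖_∞) · |(f(x) - g(x)) - (f(x') - g(x'))| for f, g ∈ H. -/
lemma key_lip (G : ℝ → ℝ) (CG h B : ℝ) (hG : ContDiff ℝ 2 G)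
    (hCG : ∀ t ∈ Set.Ici (0 : ℝ),
      |(1 + t) * deriv G t| + |(1 + t) * deriv (deriv G) t| ≤ CG)
    (hh : 1 ≤ h) (a b : ℝ) (ha : |a| ≤ B) (hb : |b| ≤ B) :
    |(-h ^ 2 * G (a ^ 2 / (2 * h ^ 2))) + h ^ 2 * G (b ^ 2 / (2 * h ^ 2))|
      ≤ CG * B * |a - b| := by
  have h0 : (0:ℝ) < h := lt_of_lt_of_le one_pos hh
  have h2 : (0:ℝ) < 2 * h ^ 2 := by positivity
  set φ : ℝ → ℝ := fun u => h ^ 2 * G (u ^ 2 / (2 * h ^ 2)) with hφ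
  have hG' : ∀ t : ℝ, 0 ≤ t → |deriv G t| ≤ CG := by
    intro t ht
    have h1t : (1:ℝ) ≤ 1 + t := by linarith
    have := hCG t ht
    have habs : |deriv G t| ≤ |(1 + t) * deriv G t| := by
      rw [abs_mul]
      nlinarith [abs_nonneg (deriv G t), abs_of_nonneg (by linarith : (0:ℝ) ≤ 1 + t)]
    linarith [abs_nonneg ((1 + t) * deriv (deriv G) t)]
  have hderiv : ∀ u : ℝ, HasDerivAt φ (u * deriv G (u ^ 2 / (2 * h ^ 2))) u := by
    intro u
    have hinner : HasDerivAt (fun u : ℝ => u ^ 2 / (2 * h ^ 2)) (u / h ^ 2) u := by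
      have := (hasDerivAt_pow 2 u).div_const (2 * h ^ 2)
      refine this.congr_deriv ?_
      field_simp
      ring
    have hGd : HasDerivAt G (deriv G (u ^ 2 / (2 * h ^ 2))) (u ^ 2 / (2 * h ^ 2)) :=
      ((hG.differentiable (by norm_num)) _).hasDerivAt
    have := (hGd.comp u hinner).const_mul (h ^ 2)
    refine this.congr_deriv ?_
    field_simp
  have hbound : ∀ u ∈ Set.Icc (-B) B, ‖u * deriv G (u ^ 2 / (2 * h ^ 2))‖ ≤ CG * B := by
    intro u hu
    have huB : |u| ≤ B := abs_le.mpr ⟨hu.1, hu.2⟩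
    have hGu : |deriv G (u ^ 2 / (2 * h ^ 2))| ≤ CG := hG' _ (by positivity)
    have hCG0 : 0 ≤ CG := le_trans (abs_nonneg _) hGu
    calc ‖u * deriv G (u ^ 2 / (2 * h ^ 2))‖ = |u| * |deriv G (u ^ 2 / (2 * h ^ 2))| := abs_mul _ _
      _ ≤ B * CG := mul_le_mul huB hGu (abs_nonneg _) (le_trans (abs_nonneg _) huB)
      _ = CG * B := mul_comm _ _
  have hmvt := (convex_Icc (-B) B).norm_image_sub_le_of_norm_hasDerivWithin_le
    (f := φ) (f' := fun u => u * deriv G (u ^ 2 / (2 * h ^ 2)))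
    (fun u _ => (hderiv u).hasDerivWithinAt) hbound
    (x := a) (y := b) (abs_le.mp ha) (abs_le.mp hb)
  have heq : (-h ^ 2 * G (a ^ 2 / (2 * h ^ 2))) + h ^ 2 * G (b ^ 2 / (2 * h ^ 2)) = φ b - φ a := by
    simp [hφ]; ring
  rw [heq, abs_sub_comm a b]
  exact hmvt

/-- Bounded-output kernel estimates: if |Y| ≤ M, then for all f, g in the hypothesis
space H (uniformly bounded by supH), with A'_H = 36 C_G (M + supH),
|U_f(z,z')| ≤ A'_H |(f(x)-f_ρ(x)) - (f(x')-f_ρ(x'))| and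
|U_f - U_g| ≤ A'_H |(f(x)-g(x)) - (f(x')-g(x'))|. -/
theorem stmt_12 {X : Type*} (G : ℝ → ℝ) (CG h M supH : ℝ) (hG : ContDiff ℝ 2 G)
    (hCG : ∀ t ∈ Set.Ici (0 : ℝ),
      |(1 + t) * deriv G t| + |(1 + t) * deriv (deriv G) t| ≤ CG)
    (hh : 1 ≤ h) (H : Set (X → ℝ)) (frho : X → ℝ)
    (hsupH : ∀ f ∈ H, ∀ x, |f x| ≤ supH) (hMrho : ∀ x, |frho x| ≤ M) :
    (∀ f ∈ H, ∀ (x x' : X) (y y' : ℝ), |y| ≤ M → |y'| ≤ M →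
      |(-h ^ 2 * G (((y - f x) - (y' - f x')) ^ 2 / (2 * h ^ 2)))
          + h ^ 2 * G (((y - frho x) - (y' - frho x')) ^ 2 / (2 * h ^ 2))|
        ≤ 36 * CG * (M + supH) * |(f x - frho x) - (f x' - frho x')|)
    ∧ (∀ f ∈ H, ∀ g ∈ H, ∀ (x x' : X) (y y' : ℝ), |y| ≤ M → |y'| ≤ M →
      |(-h ^ 2 * G (((y - f x) - (y' - f x')) ^ 2 / (2 * h ^ 2)))
          + h ^ 2 * G (((y - g x) - (y' - g x')) ^ 2 / (2 * h ^ 2))|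
        ≤ 36 * CG * (M + supH) * |(f x - g x) - (f x' - g x')|) := by
  have hCG0 : 0 ≤ CG :=
    le_trans (by positivity) (hCG 0 Set.self_mem_Ici)
  constructor
  · intro f hf x x' y y' hy hy'
    have hMs : 0 ≤ M + supH :=
      add_nonneg (le_trans (abs_nonneg _) (hMrho x)) (le_trans (abs_nonneg _) (hsupH f hf x))
    have ha : |(y - f x) - (y' - f x')| ≤ 4 * (M + supH) := by
      have h1 := abs_sub (y - f x) (y' - f x')
      have h2 := abs_sub y (f x)
      have h3 := abs_sub y' (f x')
      have h6 : (0:ℝ) ≤ M := le_trans (abs_nonneg _) hy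
      have := hsupH f hf x; have := hsupH f hf x'
      linarith
    have hb : |(y - frho x) - (y' - frho x')| ≤ 4 * (M + supH) := by
      have h1 := abs_sub (y - frho x) (y' - frho x')
      have h2 := abs_sub y (frho x)
      have h3 := abs_sub y' (frho x')
      have h4 := hMrho x; have h5 := hMrho x'
      have h6 : (0:ℝ) ≤ supH := le_trans (abs_nonneg _) (hsupH f hf x)
      linarith
    have hk := key_lip G CG h (4 * (M + supH)) hG hCG hh _ _ ha hb
    have heq : ((y - f x) - (y' - f x')) - ((y - frho x) - (y' - frho x'))
        = -((f x - frho x) - (f x' - frho x')) := by ring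
    rw [heq, abs_neg] at hk
    refine hk.trans ?_
    nlinarith [abs_nonneg ((f x - frho x) - (f x' - frho x')),
      mul_nonneg hCG0 hMs,
      mul_nonneg (mul_nonneg hCG0 hMs) (abs_nonneg ((f x - frho x) - (f x' - frho x')))]
  · intro f hf g hg x x' y y' hy hy'
    have hMs : 0 ≤ M + supH :=
      add_nonneg (le_trans (abs_nonneg _) (hMrho x)) (le_trans (abs_nonneg _) (hsupH f hf x))
    have ha : |(y - f x) - (y' - f x')| ≤ 4 * (M + supH) := by
      have h1 := abs_sub (y - f x) (y' - f x')
      have h2 := abs_sub y (f x)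
      have h3 := abs_sub y' (f x')
      have h6 : (0:ℝ) ≤ M := le_trans (abs_nonneg _) hy
      have := hsupH f hf x; have := hsupH f hf x'
      linarith
    have hb : |(y - g x) - (y' - g x')| ≤ 4 * (M + supH) := by
      have h1 := abs_sub (y - g x) (y' - g x')
      have h2 := abs_sub y (g x)
      have h3 := abs_sub y' (g x')
      have := hsupH g hg x; have := hsupH g hg x'
      linarith
    have hk := key_lip G CG h (4 * (M + supH)) hG hCG hh _ _ ha hb
    have heq : ((y - f x) - (y' - f x')) - ((y - g x) - (y' - g x'))
        = -((f x - g x) - (f x' - g x')) := by ring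
    rw [heq, abs_neg] at hk
    refine hk.trans ?_
    nlinarith [abs_nonneg ((f x - g x) - (f x' - g x')),
      mul_nonneg hCG0 hMs,
      mul_nonneg (mul_nonneg hCG0 hMs) (abs_nonneg ((f x - g x) - (f x' - g x')))]
end
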